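/- Let n ≥ 1 and let v_0, …, v_n ∈ R^n be distinct unit vectors whose pairwise Euclidean distances are all equal (i.e., they are the vertices of a regular simplex inscribed in the unit sphere). Then for every index choice 0 ≤ j_1 < … < j_n ≤ n, one has |det(v_{j_1}, …, v_{j_n})| = sqrt((n+1)^(n-1) / n^n). -/

import Mathlib

open Matrix
open scoped RealInnerProductSpace

lemma auxdet2 (k : ℕ) (a b : ℝ) (ha : a ≠ 0) :
    Matrix.det (Matrix.of fun i j : Fin k => if i = j then a + b else b)
      = a ^ k * (1 + k * (b / a)) := by
  have key : (Matrix.of fun i j : Fin k => if i = j then a + b else b)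
      = a • (1 + Matrix.replicateCol Unit (fun _ => b / a) * Matrix.replicateRow Unit (fun _ => (1:ℝ))) := by
    ext i j
    by_cases h : i = j <;> simp [h, Matrix.mul_apply, Matrix.one_apply] <;> field_simp
  rw [key, Matrix.det_smul, Matrix.det_one_add_replicateCol_mul_replicateRow]
  simp [dotProduct, mul_comm]

theorem stmt3 (n : ℕ) (hn : 1 ≤ n) (v : Fin (n + 1) → EuclideanSpace ℝ (Fin n))
    (hv : ∀ j, ‖v j‖ = 1)
    (hinj : Function.Injective v)
    (d : ℝ) (hd : ∀ j k, j ≠ k → ‖v j - v k‖ = d) :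
    ∀ s : Fin n → Fin (n + 1), StrictMono s →
      |Matrix.det (Matrix.of fun i a => v (s a) i)| =
        Real.sqrt (((n : ℝ) + 1) ^ (n - 1) / (n : ℝ) ^ n) := by
  intro s hs
  set c : ℝ := 1 - d ^ 2 / 2 with hc_def
  have hinner : ∀ j k, j ≠ k → ⟪v j, v k⟫ = c := by
    intro j k hjk
    have h2 : ‖v j - v k‖ ^ 2 = ‖v j‖ ^ 2 - 2 * ⟪v j, v k⟫ + ‖v k‖ ^ 2 :=
      norm_sub_sq_real _ _
    rw [hd j k hjk, hv, hv] at h2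
    rw [hc_def]; linarith
  have hself : ∀ j, ⟪v j, v j⟫ = 1 := by
    intro j; rw [real_inner_self_eq_norm_sq, hv]; norm_num
  have h01 : (0 : Fin (n + 1)) ≠ 1 := by
    simp [Fin.ext_iff]; omega
  have hd0 : d ≠ 0 := by
    intro h
    have h2 := hd 0 1 h01
    rw [h, norm_eq_zero, sub_eq_zero] at h2
    exact h01 (hinj h2)
  have hc1 : c ≠ 1 := by
    rw [hc_def]; intro h
    have hd2 : d ^ 2 = 0 := by linarith
    exact hd0 (by nlinarith [sq_nonneg d] : d = 0)
  clear_value c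
  clear hc_def
  -- v is not linearly independent
  have hnli : ¬ LinearIndependent ℝ v := by
    intro h
    have h2 := h.fintype_card_le_finrank
    rw [Fintype.card_fin, finrank_euclideanSpace_fin] at h2
    omega
  obtain ⟨g, hg, i0, hi0⟩ := Fintype.not_linearIndependent_iff.mp hnli
  set S : ℝ := ∑ j, g j with hS
  have hrow : ∀ j, S * c + g j * (1 - c) = 0 := by
    intro j
    have h0 : ⟪v j, ∑ k, g k • v k⟫ = 0 := by rw [hg, inner_zero_right]
    rw [inner_sum] at h0
    have hterm : ∀ k, ⟪v j, g k • v k⟫ = g k * c + (if k = j then g j * (1 - c) else 0) := by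
      intro k
      rw [real_inner_smul_right]
      by_cases h : k = j
      · subst h; rw [hself]; simp; ring
      · rw [hinner j k (Ne.symm h)]; simp [h]
    rw [Finset.sum_congr rfl (fun k _ => hterm k), Finset.sum_add_distrib,
      Finset.sum_ite_eq' Finset.univ j, ← Finset.sum_mul] at h0
    simpa [← hS] using h0
  have hSne : S ≠ 0 := by
    intro h
    have h2 := hrow i0
    rw [h] at h2
    have : g i0 * (1 - c) = 0 := by linarith
    rcases mul_eq_zero.mp this with h3 | h3
    · exact hi0 h3
    · exact hc1 (by linarith)
  have hcval : c = -1 / n := by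
    have hsum : ∑ j : Fin (n + 1), (S * c + g j * (1 - c)) = 0 :=
      Finset.sum_eq_zero fun j _ => hrow j
    rw [Finset.sum_add_distrib, Finset.sum_const, ← Finset.sum_mul, ← hS] at hsum
    simp only [Finset.card_univ, Fintype.card_fin, nsmul_eq_mul] at hsum
    push_cast at hsum
    -- (n+1) * (S * c) + S * (1 - c) = 0
    have hnn : (n : ℝ) ≠ 0 := Nat.cast_ne_zero.mpr (by omega)
    have h2 : S * ((n + 1) * c + (1 - c)) = 0 := by ring_nf; ring_nf at hsum; linarith
    have h3 : (n + 1 : ℝ) * c + (1 - c) = 0 := by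
      rcases mul_eq_zero.mp h2 with h | h
      · exact absurd h hSne
      · exact h
    field_simp
    linarith
  -- Gram matrix of the selected columns
  set M := (Matrix.of fun i a => v (s a) i : Matrix (Fin n) (Fin n) ℝ) with hM
  have hnn : (n : ℝ) ≠ 0 := Nat.cast_ne_zero.mpr (by omega)
  have hgram : Mᵀ * M = Matrix.of fun a b : Fin n =>
      if a = b then ((n : ℝ) + 1) / n + (-1 / n) else (-1 / n) := by
    ext a b
    have : (Mᵀ * M) a b = ⟪v (s a), v (s b)⟫ := by
      simp [hM, Matrix.mul_apply, PiLp.inner_apply, RCLike.inner_apply, conj_trivial]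
      exact Finset.sum_congr rfl fun _ _ => mul_comm _ _
    rw [this]
    by_cases h : a = b
    · subst h
      rw [hself]
      simp only [Matrix.of_apply, if_pos rfl]
      rw [if_pos trivial, ← add_div, eq_div_iff hnn]; ring
    · have hsab : s a ≠ s b := fun hh => h (hs.injective hh)
      rw [hinner _ _ hsab, hcval]
      simp [h]
  have hdet2 : Matrix.det M ^ 2 = (((n : ℝ) + 1)) ^ (n - 1) / (n : ℝ) ^ n := by
    have h1 : Matrix.det (Mᵀ * M) = Matrix.det M ^ 2 := by
      rw [Matrix.det_mul, Matrix.det_transpose, sq]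
    have hane : ((n : ℝ) + 1) / n ≠ 0 := by positivity
    rw [hgram, auxdet2 n _ _ hane] at h1
    rw [← h1]
    have hmul : ((n : ℝ) + 1) ^ n = ((n : ℝ) + 1) ^ (n - 1) * ((n : ℝ) + 1) := by
      rw [← pow_succ]
      congr 1
      omega
    rw [div_pow]
    have hn1 : (n : ℝ) + 1 ≠ 0 := by positivity
    field_simp
    rw [hmul]
    ring
  rw [← hdet2, Real.sqrt_sq_eq_abs]
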